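/- The determinant solution satisfies the boundary condition: with $P(\mathbf{x}|\mathbf{y};t)=\prod_{i=1}^N e^{-tv_i}v_i^{x_i-y_i}\det[F_{m,n}(x_n-y_m,t)]_{m,n}$, for every $1\le \kappa\le N-1$, $v_{\kappa+1}P(\dots,x_\kappa,x_\kappa,\dots|\mathbf{y};t)=v_\kappa P(\dots,x_\kappa,x_\kappa+1,\dots|\mathbf{y};t)$, where the displayed arguments are the $\kappa$-th and $(\kappa+1)$-st coordinates of $\mathbf{x}$. -/

import Mathlib

open Finset

/-- The contour-integral function `F_{k,l}(x,t)` of Rákos–Schütz: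
`F_{k,l}(x,t) = (2πi)⁻¹ ∮ e^{t/z} z^{x-1} ∏_{i=1}^{l-1}(1 - v_i z)⁻¹ ∏_{i=1}^{k-1}(1 - v_i z) dz`
along a circle of radius `ε` around the origin.  The rates are `v 1, v 2, …`. -/
noncomputable def F (v : ℕ → ℝ) (ε : ℝ) (k l : ℕ) (x : ℤ) (t : ℝ) : ℂ :=
  (2 * Real.pi * Complex.I)⁻¹ *
    (∮ z in C(0, ε), Complex.exp ((t : ℂ) / z) * z ^ (x - 1) *
      (∏ i ∈ range (l - 1), (1 - (v (i + 1) : ℂ) * z)⁻¹) *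
      ∏ i ∈ range (k - 1), (1 - (v (i + 1) : ℂ) * z))

lemma one_sub_ne {v : ℕ → ℝ} {vmax : ℝ} (hv : ∀ i, 0 < v i) (hvm : ∀ i, v i ≤ vmax)
    {ε : ℝ} (hε : 0 < ε) (hεm : ε < 1 / vmax) (j : ℕ) {z : ℂ}
    (hz : z ∈ Metric.sphere (0 : ℂ) ε) : (1 : ℂ) - (v j : ℂ) * z ≠ 0 := by
  have hvmax : 0 < vmax := lt_of_lt_of_le (hv 0) (hvm 0)
  have habs : ‖z‖ = ε := by simpa using hz
  intro h
  have h1 : (v j : ℂ) * z = 1 := by linear_combination -h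
  have h2 : ‖(v j : ℂ) * z‖ = 1 := by rw [h1]; simp
  rw [norm_mul, Complex.norm_real, Real.norm_eq_abs, abs_of_pos (hv j), habs] at h2
  have : v j * ε < 1 := by
    calc v j * ε ≤ vmax * ε := by nlinarith [hv j, hvm j]
    _ < 1 := by rw [lt_div_iff₀ hvmax] at hεm; nlinarith
  linarith

lemma contOn (v : ℕ → ℝ) (t : ℝ) (k l : ℕ) (x : ℤ) {ε : ℝ} (hε : 0 < ε)
    (hne : ∀ j z, z ∈ Metric.sphere (0:ℂ) ε → (1 : ℂ) - (v j : ℂ) * z ≠ 0) :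
    ContinuousOn (fun z : ℂ => Complex.exp ((t : ℂ) / z) * z ^ (x - 1) *
      (∏ i ∈ range l, (1 - (v (i + 1) : ℂ) * z)⁻¹) *
      ∏ i ∈ range k, (1 - (v (i + 1) : ℂ) * z)) (Metric.sphere (0 : ℂ) ε) := by
  have hz0 : ∀ z ∈ Metric.sphere (0 : ℂ) ε, z ≠ 0 := by
    intro z hz h0
    rw [h0] at hz
    simp at hz
    linarith
  refine ContinuousOn.mul (ContinuousOn.mul (ContinuousOn.mul ?_ ?_) ?_) ?_
  · exact Complex.continuous_exp.comp_continuousOn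
      (continuousOn_const.div continuousOn_id hz0)
  · exact continuousOn_id.zpow₀ _ fun z hz => Or.inl (hz0 z hz)
  · exact continuousOn_finset_prod _ fun i _ =>
      ((continuousOn_const.sub (continuousOn_const.mul continuousOn_id)).inv₀
        fun z hz => hne (i+1) z hz)
  · exact continuousOn_finset_prod _ fun i _ =>
      (continuousOn_const.sub (continuousOn_const.mul continuousOn_id))

lemma F_rec {v : ℕ → ℝ} {vmax : ℝ} (hv : ∀ i, 0 < v i) (hvm : ∀ i, v i ≤ vmax)
    {ε : ℝ} (hε : 0 < ε) (hεm : ε < 1 / vmax) (k l : ℕ) (hl : 1 ≤ l) (x : ℤ) (t : ℝ) :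
    F v ε k l x t = F v ε k (l + 1) x t - (v l : ℂ) * F v ε k (l + 1) (x + 1) t := by
  have hne : ∀ j z, z ∈ Metric.sphere (0:ℂ) ε → (1 : ℂ) - (v j : ℂ) * z ≠ 0 :=
    fun j z hz => one_sub_ne hv hvm hε hεm j hz
  have key : (∮ z in C(0, ε), Complex.exp ((t : ℂ) / z) * z ^ (x - 1) *
      (∏ i ∈ range (l - 1), (1 - (v (i + 1) : ℂ) * z)⁻¹) *
      ∏ i ∈ range (k - 1), (1 - (v (i + 1) : ℂ) * z))
      = (∮ z in C(0, ε), Complex.exp ((t : ℂ) / z) * z ^ (x - 1) *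
      (∏ i ∈ range ((l+1) - 1), (1 - (v (i + 1) : ℂ) * z)⁻¹) *
      ∏ i ∈ range (k - 1), (1 - (v (i + 1) : ℂ) * z))
      - (v l : ℂ) * (∮ z in C(0, ε), Complex.exp ((t : ℂ) / z) * z ^ (x + 1 - 1) *
      (∏ i ∈ range ((l+1) - 1), (1 - (v (i + 1) : ℂ) * z)⁻¹) *
      ∏ i ∈ range (k - 1), (1 - (v (i + 1) : ℂ) * z)) := ?_
  · unfold F
    rw [key]
    ring
  have hint : ∀ (x' : ℤ), CircleIntegrable (fun z : ℂ =>
      Complex.exp ((t : ℂ) / z) * z ^ (x' - 1) *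
      (∏ i ∈ range ((l+1) - 1), (1 - (v (i + 1) : ℂ) * z)⁻¹) *
      ∏ i ∈ range (k - 1), (1 - (v (i + 1) : ℂ) * z)) 0 ε :=
    fun x' => (contOn v t (k-1) ((l+1)-1) x' hε hne).circleIntegrable hε.le
  have hsmul : (v l : ℂ) * (∮ z in C(0, ε), Complex.exp ((t : ℂ) / z) * z ^ (x + 1 - 1) *
      (∏ i ∈ range ((l+1) - 1), (1 - (v (i + 1) : ℂ) * z)⁻¹) *
      ∏ i ∈ range (k - 1), (1 - (v (i + 1) : ℂ) * z))
      = ∮ z in C(0, ε), (v l : ℂ) * (Complex.exp ((t : ℂ) / z) * z ^ (x + 1 - 1) *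
      (∏ i ∈ range ((l+1) - 1), (1 - (v (i + 1) : ℂ) * z)⁻¹) *
      ∏ i ∈ range (k - 1), (1 - (v (i + 1) : ℂ) * z)) := by
    exact (circleIntegral.integral_smul (v l : ℂ) _ 0 ε).symm
  rw [hsmul, ← circleIntegral.integral_sub (hint x)
    (by exact (continuousOn_const.mul
      (contOn v t (k-1) ((l+1)-1) (x+1) hε hne)).circleIntegrable hε.le :
      CircleIntegrable (fun z : ℂ => (v l : ℂ) * (Complex.exp ((t : ℂ) / z) * z ^ (x + 1 - 1) *
      (∏ i ∈ range ((l+1) - 1), (1 - (v (i + 1) : ℂ) * z)⁻¹) *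
      ∏ i ∈ range (k - 1), (1 - (v (i + 1) : ℂ) * z))) 0 ε)]
  refine (circleIntegral.integral_congr hε.le fun z hz => ?_).symm
  have hz0 : z ≠ 0 := by
    intro h0; rw [h0] at hz; simp at hz; linarith
  have hw : (1 : ℂ) - (v l : ℂ) * z ≠ 0 := hne l z hz
  have hP : (∏ i ∈ range ((l+1) - 1), (1 - (v (i + 1) : ℂ) * z)⁻¹)
      = (∏ i ∈ range (l - 1), (1 - (v (i + 1) : ℂ) * z)⁻¹) * (1 - (v l : ℂ) * z)⁻¹ := by
    have h1 : (l + 1) - 1 = (l - 1) + 1 := by omega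
    have h2 : (l - 1) + 1 = l := by omega
    rw [h1, prod_range_succ, h2]
  have hzpow : (z : ℂ) ^ (x + 1 - 1) = z ^ (x - 1) * z := by
    rw [show x + 1 - 1 = (x - 1) + 1 by ring, zpow_add_one₀ hz0]
  rw [hP, hzpow]
  have hc : (1 - (v l : ℂ) * z)⁻¹ * (1 - (v l : ℂ) * z) = 1 := inv_mul_cancel₀ hw
  linear_combination (Complex.exp ((t : ℂ) / z) * z ^ (x - 1) *
    (∏ i ∈ range (l - 1), (1 - (v (i + 1) : ℂ) * z)⁻¹) *
    (∏ i ∈ range (k - 1), (1 - (v (i + 1) : ℂ) * z))) * hc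

/-- The determinant formula for the conditional probability:
`P(x|y;t) = ∏_i e^{-t v_i} v_i^{x_i - y_i} · det[F_{m,n}(x_n - y_m, t)]`,
written 0-based in `m,n` (particle `i` (0-based) has rate `v (i+1)`). -/
noncomputable def Pc (N : ℕ) (v : ℕ → ℝ) (ε : ℝ) (y x : Fin N → ℤ) (t : ℝ) : ℂ :=
  (∏ i : Fin N,
      Complex.exp (-(t * v ((i : ℕ) + 1) : ℝ)) * (v ((i : ℕ) + 1) : ℂ) ^ (x i - y i)) *
    Matrix.det (Matrix.of fun m n : Fin N =>
      F v ε ((m : ℕ) + 1) ((n : ℕ) + 1) (x n - y m) t)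

theorem determinant_boundary_condition
    (N : ℕ) (v : ℕ → ℝ) (vmax : ℝ) (hv : ∀ i, 0 < v i) (hvm : ∀ i, v i ≤ vmax)
    (ε : ℝ) (hε : 0 < ε) (hεm : ε < 1 / vmax)
    (y : Fin N → ℤ) (t : ℝ) (ht : 0 ≤ t)
    (q : ℕ) (hq : q + 1 < N) (x : Fin N → ℤ)
    (hx : x ⟨q + 1, hq⟩ = x ⟨q, Nat.lt_of_succ_lt hq⟩) :
    (v (q + 2) : ℂ) * Pc N v ε y x t =
      (v (q + 1) : ℂ) *
        Pc N v ε y (Function.update x ⟨q + 1, hq⟩ (x ⟨q, Nat.lt_of_succ_lt hq⟩ + 1)) t := by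
  set i0 : Fin N := ⟨q, Nat.lt_of_succ_lt hq⟩ with hi0
  set i1 : Fin N := ⟨q + 1, hq⟩ with hi1
  have hne01 : i0 ≠ i1 := Fin.ne_of_val_ne (show q ≠ q + 1 by omega)
  set x' : Fin N → ℤ := Function.update x i1 (x i0 + 1) with hx'def
  have hx'i0 : x' i0 = x i0 := Function.update_of_ne hne01 _ x
  have hx'i1 : x' i1 = x i0 + 1 := Function.update_self _ _ _
  have hx'other : ∀ n, n ≠ i1 → x' n = x n := fun n hn => Function.update_of_ne hn _ x
  set C : Fin N → ℂ := fun m => F v ε ((m : ℕ) + 1) (q + 2) (x i0 - y m) t with hC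
  set D : Fin N → ℂ := fun m => F v ε ((m : ℕ) + 1) (q + 2) (x i0 + 1 - y m) t with hD
  set M : Matrix (Fin N) (Fin N) ℂ :=
    Matrix.of (fun m n : Fin N => F v ε ((m : ℕ) + 1) ((n : ℕ) + 1) (x n - y m) t) with hM
  set M' : Matrix (Fin N) (Fin N) ℂ :=
    Matrix.of (fun m n : Fin N => F v ε ((m : ℕ) + 1) ((n : ℕ) + 1) (x' n - y m) t) with hM'
  have key : ∀ m : Fin N,
      F v ε ((m : ℕ) + 1) (q + 1) (x i0 - y m) t = C m - (v (q + 1) : ℂ) * D m := by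
    intro m
    rw [F_rec hv hvm hε hεm ((m : ℕ) + 1) (q + 1) (Nat.le_add_left 1 q) (x i0 - y m) t]
    simp only [hC, hD]
    rw [sub_add_eq_add_sub]
  have hMq : ∀ m, M m i0 = C m - (v (q + 1) : ℂ) * D m := fun m => key m
  have hMq1 : ∀ m, M m i1 = C m := by
    intro m
    show F v ε ((m : ℕ) + 1) ((q + 1) + 1) (x i1 - y m) t = C m
    rw [hx]
  have hM'q : ∀ m, M' m i0 = C m - (v (q + 1) : ℂ) * D m := by
    intro m
    show F v ε ((m : ℕ) + 1) (q + 1) (x' i0 - y m) t = _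
    rw [hx'i0]
    exact key m
  have hM'q1 : ∀ m, M' m i1 = D m := by
    intro m
    show F v ε ((m : ℕ) + 1) ((q + 1) + 1) (x' i1 - y m) t = D m
    rw [hx'i1]
  have hagree : ∀ m n, n ≠ i1 → M m n = M' m n := by
    intro m n hn1
    show F v ε _ _ (x n - y m) t = F v ε _ _ (x' n - y m) t
    rw [hx'other n hn1]
  have hdet : M.det = (v (q + 1) : ℂ) * M'.det := by
    set K := M'.updateCol i0 C with hK
    set L := M.updateCol i0 D with hL
    have hcolM' : (fun m => M' m i0) = fun m => C m + (-(v (q + 1) : ℂ)) • D m := by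
      funext m
      rw [hM'q m, smul_eq_mul]
      ring
    have hcolM : (fun m => M m i0) = fun m => C m + (-(v (q + 1) : ℂ)) • D m := by
      funext m
      rw [hMq m, smul_eq_mul]
      ring
    have hdetM' : M'.det = K.det := by
      conv_lhs => rw [← Matrix.updateCol_eq_self M' i0, hcolM']
      rw [show (fun m => C m + (-(v (q + 1) : ℂ)) • D m)
            = (C + (-(v (q + 1) : ℂ)) • D) from rfl,
        Matrix.det_updateCol_add, Matrix.det_updateCol_smul]
      have hzero : (M'.updateCol i0 D).det = 0 := by
        refine Matrix.det_zero_of_column_eq hne01 fun m => ?_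
        rw [Matrix.updateCol_self, Matrix.updateCol_ne (Ne.symm hne01), hM'q1 m]
      rw [hzero]
      simp [hK]
    have hdetM : M.det = -(v (q + 1) : ℂ) * L.det := by
      conv_lhs => rw [← Matrix.updateCol_eq_self M i0, hcolM]
      rw [show (fun m => C m + (-(v (q + 1) : ℂ)) • D m)
            = (C + (-(v (q + 1) : ℂ)) • D) from rfl,
        Matrix.det_updateCol_add, Matrix.det_updateCol_smul]
      have hzero : (M.updateCol i0 C).det = 0 := by
        refine Matrix.det_zero_of_column_eq hne01 fun m => ?_
        rw [Matrix.updateCol_self, Matrix.updateCol_ne (Ne.symm hne01), hMq1 m]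
      rw [hzero]
      ring
    have hLK : L = K.submatrix id (Equiv.swap i0 i1) := by
      ext m n
      rcases eq_or_ne n i0 with rfl | h0
      · rw [Matrix.submatrix_apply, id, Equiv.swap_apply_left, hL, hK,
          Matrix.updateCol_self, Matrix.updateCol_ne (Ne.symm hne01), hM'q1 m]
      rcases eq_or_ne n i1 with rfl | h1
      · rw [Matrix.submatrix_apply, id, Equiv.swap_apply_right, hL, hK,
          Matrix.updateCol_self, Matrix.updateCol_ne (Ne.symm hne01), hMq1 m]
      · rw [Matrix.submatrix_apply, id, Equiv.swap_apply_of_ne_of_ne h0 h1, hL, hK,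
          Matrix.updateCol_ne h0, Matrix.updateCol_ne h0, hagree m n h1]
    have hswap : L.det = -K.det := by
      rw [hLK, Matrix.det_permute', Equiv.Perm.sign_swap hne01]
      simp
    rw [hdetM, hswap, hdetM']
    ring
  have hpref : (∏ i : Fin N,
        Complex.exp (-(t * v ((i : ℕ) + 1) : ℝ)) * (v ((i : ℕ) + 1) : ℂ) ^ (x' i - y i))
      = (v (q + 2) : ℂ) * ∏ i : Fin N,
        Complex.exp (-(t * v ((i : ℕ) + 1) : ℝ)) * (v ((i : ℕ) + 1) : ℂ) ^ (x i - y i) := by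
    rw [← Finset.mul_prod_erase Finset.univ _ (Finset.mem_univ i1),
        ← Finset.mul_prod_erase Finset.univ
          (fun i : Fin N => Complex.exp (-(t * v ((i : ℕ) + 1) : ℝ)) *
            (v ((i : ℕ) + 1) : ℂ) ^ (x i - y i)) (Finset.mem_univ i1)]
    have hrest : (∏ i ∈ Finset.univ.erase i1,
          Complex.exp (-(t * v ((i : ℕ) + 1) : ℝ)) * (v ((i : ℕ) + 1) : ℂ) ^ (x' i - y i))
        = ∏ i ∈ Finset.univ.erase i1,
          Complex.exp (-(t * v ((i : ℕ) + 1) : ℝ)) * (v ((i : ℕ) + 1) : ℂ) ^ (x i - y i) :=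
      Finset.prod_congr rfl fun i hi => by
        rw [hx'other i (Finset.ne_of_mem_erase hi)]
    rw [hrest]
    have hterm : (v ((i1 : ℕ) + 1) : ℂ) ^ (x' i1 - y i1)
        = (v (q + 2) : ℂ) * (v ((i1 : ℕ) + 1) : ℂ) ^ (x i1 - y i1) := by
      have hv0 : (v (q + 2) : ℂ) ≠ 0 := by
        exact_mod_cast ne_of_gt (hv (q + 2))
      have h1 : x i1 = x i0 := hx
      rw [hx'i1, h1, show x i0 + 1 - y i1 = (x i0 - y i1) + 1 by ring]
      show (v (q + 2) : ℂ) ^ (x i0 - y i1 + 1) = (v (q + 2) : ℂ) * (v (q + 2) : ℂ) ^ (x i0 - y i1)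
      rw [zpow_add_one₀ hv0]
      ring
    rw [hterm]
    ring
  show (v (q + 2) : ℂ) * ((∏ i : Fin N,
        Complex.exp (-(t * v ((i : ℕ) + 1) : ℝ)) * (v ((i : ℕ) + 1) : ℂ) ^ (x i - y i)) * M.det)
      = (v (q + 1) : ℂ) * ((∏ i : Fin N,
        Complex.exp (-(t * v ((i : ℕ) + 1) : ℝ)) * (v ((i : ℕ) + 1) : ℂ) ^ (x' i - y i)) * M'.det)
  rw [hpref, hdet]
  ring
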